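/- Let Γ be a Polish group acting continuously on topological spaces X and Y that are Hausdorff and Baire. Assume the action of Γ on X is minimal (every orbit is dense) and that π: X → Y is a continuous surjective Γ-equivariant map. If x_0 ∈ X has comeager orbit Γ·x_0 in X, then π(x_0) has comeager orbit Γ·π(x_0) in Y. -/

import Mathlib

open MulAction

namespace UEAux17

open Set Metric TopologicalSpace Filter Pointwise

variable {α : Type*} [TopologicalSpace α]

lemma nwd_isMeagre {s : Set α} (h : IsNowhereDense s) : IsMeagre s := by
  rw [isMeagre_iff_countable_union_isNowhereDense]
  exact ⟨{s}, by simpa using h, countable_singleton s, by simp⟩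

lemma isMeagre_biUnion' {ι : Type*} {S : Set ι} (hS : S.Countable)
    {f : ι → Set α} (h : ∀ i ∈ S, IsMeagre (f i)) : IsMeagre (⋃ i ∈ S, f i) := by
  rw [IsMeagre, compl_iUnion₂]
  exact (countable_bInter_mem hS).2 h

lemma not_isMeagre_univ [BaireSpace α] [Nonempty α] : ¬ IsMeagre (univ : Set α) := by
  intro h
  rw [IsMeagre, compl_univ] at h
  simpa using (dense_of_mem_residual h).nonempty

lemma isNowhereDense_closure_diff {O : Set α} (hO : IsOpen O) :
    IsNowhereDense (closure O \ O) := by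
  have hcl : IsClosed (closure O \ O) := isClosed_closure.inter (isClosed_compl_iff.2 hO)
  rw [hcl.isNowhereDense_iff, eq_empty_iff_forall_notMem]
  intro x hx
  have h1 : x ∈ closure O := (interior_subset hx).1
  obtain ⟨z, hz1, hz2⟩ := _root_.mem_closure_iff.1 h1 _ isOpen_interior hx
  exact (interior_subset hz1).2 hz2

lemma isMeagre_smul {Γ : Type*} [Group Γ]
    [MulAction Γ α] [ContinuousConstSMul Γ α] (g : Γ) {s : Set α} (hs : IsMeagre s) :
    IsMeagre (g • s) := by
  have h : (g • s) = (fun y : α => g⁻¹ • y) ⁻¹' s := by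
    rw [preimage_smul, inv_inv]
  rw [h]
  exact hs.preimage_of_isOpenMap (continuous_const_smul _) (isOpenMap_smul _)

section Key

variable {Γ : Type*} [Group Γ] [TopologicalSpace Γ] [PolishSpace Γ]
variable {Y : Type*} [TopologicalSpace Y] [T2Space Y] [MulAction Γ Y] [ContinuousSMul Γ Y]

/-- The Effros/Choquet-style construction: if every image of a nonempty open subset of `Γ`
at `y₀` is nonmeager in every open set it meets, then the orbit of `y₀` is comeager in some
nonempty open set. -/
lemma keyCapture (y₀ : Y)
    (hloc : ∀ (B : Set Γ) (W : Set Y), IsOpen B → IsOpen W →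
      (((fun g : Γ => g • y₀) '' B) ∩ W).Nonempty →
      ¬ IsMeagre (((fun g : Γ => g • y₀) '' B) ∩ W)) :
    ∃ V : Set Y, IsOpen V ∧ V.Nonempty ∧ IsMeagre (V \ orbit Γ y₀) := by
  classical
  letI := upgradeIsCompletelyMetrizable Γ
  set e : Γ → Y := fun g => g • y₀ with he
  have hecont : Continuous e := continuous_id.smul continuous_const
  have him : ∀ B : Set Γ, IsOpen B → B.Nonempty → ¬ IsMeagre (e '' B) := by
    intro B hB hne h
    rcases hne with ⟨g, hg⟩
    exact hloc B univ hB isOpen_univ ⟨e g, ⟨g, hg, rfl⟩, trivial⟩ (by simpa using h)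
  -- refinement step
  have href : ∀ (W : Set Y) (B : Set Γ), IsOpen W → IsOpen B →
      W ⊆ closure (e '' B) → ∀ (W' : Set Y), IsOpen W' → W'.Nonempty → W' ⊆ W →
      ∀ ε : ℝ, 0 < ε →
      ∃ (W'' : Set Y) (B'' : Set Γ), IsOpen W'' ∧ W''.Nonempty ∧ IsOpen B'' ∧ B''.Nonempty ∧
        W'' ⊆ closure (e '' B'') ∧ W'' ⊆ W' ∧ closure B'' ⊆ B ∧ ∃ c : Γ, B'' ⊆ ball c ε := by
    intro W B hW hB hWB W' hW' hW'ne hW'W ε hε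
    set J : Set (Set Γ) := {b ∈ countableBasis Γ | closure b ⊆ B ∧ ∃ c, b ⊆ ball c ε} with hJ
    have hJc : J.Countable := (countable_countableBasis Γ).mono (sep_subset _ _)
    have hBJ : B = ⋃ b ∈ J, b := by
      apply Subset.antisymm
      · intro g hg
        obtain ⟨r, hr0, hrB⟩ := (Metric.nhds_basis_closedBall.mem_iff).1 (hB.mem_nhds hg)
        have hr'0 : 0 < min r (ε/2) := lt_min hr0 (by linarith)
        obtain ⟨b, hbB, hgb, hbsub⟩ := (isBasis_countableBasis Γ).exists_subset_of_mem_open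
          (Metric.mem_ball_self hr'0) isOpen_ball
        refine mem_biUnion ⟨hbB, ?_, ⟨g, hbsub.trans (ball_subset_ball ?_)⟩⟩ hgb
        · refine (closure_mono hbsub).trans (closure_ball_subset_closedBall.trans ?_)
          exact (closedBall_subset_closedBall (min_le_left _ _)).trans hrB
        · have : min r (ε/2) ≤ ε/2 := min_le_right _ _
          linarith
      · intro g hg
        simp only [mem_iUnion] at hg
        obtain ⟨b, ⟨_, hbB, _⟩, hgb⟩ := hg
        exact hbB (subset_closure hgb)
    have hne : (e '' B ∩ W').Nonempty := by
      obtain ⟨w, hw⟩ := hW'ne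
      obtain ⟨z, hz1, hz2⟩ := _root_.mem_closure_iff.1 (hWB (hW'W hw)) W' hW' hw
      exact ⟨z, hz2, hz1⟩
    have hnm := hloc B W' hB hW' hne
    have hdecomp : e '' B ∩ W' = ⋃ b ∈ J, (e '' b ∩ W') := by
      conv_lhs => rw [hBJ]
      rw [image_iUnion₂, iUnion₂_inter]
    have hgood : ∃ b ∈ J, ¬ IsMeagre (e '' b ∩ W') := by
      by_contra hcon
      push_neg at hcon
      exact hnm (by rw [hdecomp]; exact isMeagre_biUnion' hJc hcon)
    obtain ⟨b, hbJ, hbnm⟩ := hgood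
    obtain ⟨hbbasis, hbclB, hbball⟩ := hbJ
    have hbo : IsOpen b := isOpen_of_mem_countableBasis hbbasis
    set S := e '' b ∩ W' with hS
    have hint : (interior (closure S)).Nonempty := by
      rw [nonempty_iff_ne_empty]
      intro hemp
      exact hbnm (nwd_isMeagre hemp)
    obtain ⟨pt, hpt⟩ := hint
    obtain ⟨q, hq1, hq2⟩ :=
      _root_.mem_closure_iff.1 (interior_subset hpt) _ isOpen_interior hpt
    set W'' := interior (closure S) ∩ W' with hW''d
    have hW''o : IsOpen W'' := isOpen_interior.inter hW'
    have hqW'' : q ∈ W'' := ⟨hq1, hq2.2⟩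
    set B'' := b ∩ e ⁻¹' W'' with hB''d
    have hB''o : IsOpen B'' := hbo.inter (hW''o.preimage hecont)
    have himB'' : e '' B'' = e '' b ∩ W'' := by
      apply Subset.antisymm
      · rintro _ ⟨g, ⟨hg1, hg2⟩, rfl⟩; exact ⟨⟨g, hg1, rfl⟩, hg2⟩
      · rintro z ⟨⟨g, hg1, rfl⟩, hz2⟩; exact ⟨g, ⟨hg1, hz2⟩, rfl⟩
    have hB''ne : B''.Nonempty := by
      obtain ⟨g, hg1, hge⟩ := hq2.1
      exact ⟨g, hg1, by rw [mem_preimage, hge]; exact hqW''⟩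
    refine ⟨W'', B'', hW''o, ⟨q, hqW''⟩, hB''o, hB''ne, ?_, inter_subset_right,
      (closure_mono inter_subset_left).trans hbclB, ?_⟩
    · rw [himB'']
      intro z hz
      have h2 := hW''o.inter_closure (⟨hz, interior_subset hz.1⟩ : z ∈ W'' ∩ closure S)
      refine closure_mono ?_ h2
      rintro u ⟨hu1, hu2⟩
      exact ⟨hu2.1, hu1⟩
    · obtain ⟨c, hc⟩ := hbball
      exact ⟨c, inter_subset_left.trans hc⟩
  -- initial position
  have hV0 : (interior (closure (e '' univ))).Nonempty := by
    rw [nonempty_iff_ne_empty]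
    intro hemp
    exact him univ isOpen_univ univ_nonempty (nwd_isMeagre hemp)
  obtain ⟨V, B₀, hVo, hVne, hB₀o, hB₀ne, hVB₀, hVW₀, hB₀cl, hB₀ball⟩ :=
    href (interior (closure (e '' univ))) univ isOpen_interior isOpen_univ interior_subset
      (interior (closure (e '' univ))) isOpen_interior hV0 Subset.rfl 1 one_pos
  -- families
  let Pos : Set Y × Set Γ → Prop := fun p =>
    IsOpen p.1 ∧ p.1.Nonempty ∧ IsOpen p.2 ∧ p.2.Nonempty ∧ p.1 ⊆ closure (e '' p.2)
  let Fam : ℕ → Set (Set Y × Set Γ) → Prop := fun n F =>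
    (∀ p ∈ F, Pos p ∧ p.1 ⊆ V ∧ ∃ c, p.2 ⊆ ball c ((1/2 : ℝ)^n)) ∧
    (∀ p ∈ F, ∀ q ∈ F, p ≠ q → p.1 ∩ q.1 = ∅) ∧
    V ⊆ closure (⋃ p ∈ F, p.1)
  let Ext : Set (Set Y × Set Γ) → Set (Set Y × Set Γ) → Prop := fun F F' =>
    ∀ p ∈ F', ∃ q ∈ F, p.1 ⊆ q.1 ∧ closure p.2 ⊆ q.2
  have hbase : Fam 0 {(V, B₀)} := by
    refine ⟨?_, ?_, ?_⟩
    · rintro p rfl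
      refine ⟨⟨hVo, hVne, hB₀o, hB₀ne, hVB₀⟩, Subset.rfl, ?_⟩
      obtain ⟨c, hc⟩ := hB₀ball
      exact ⟨c, by simpa using hc⟩
    · rintro p rfl q rfl hpq
      exact absurd rfl hpq
    · simpa using subset_closure
  have hstep : ∀ (n : ℕ) (F : Set (Set Y × Set Γ)), Fam n F →
      ∃ F', Fam (n+1) F' ∧ Ext F F' := by
    intro n F hF
    obtain ⟨hF1, hF2, hF3⟩ := hF
    have hzorn : ∀ q : Set Y × Set Γ, ∃ M : Set (Set Y × Set Γ),
        q ∈ F → ((∀ p ∈ M, Pos p ∧ p.1 ⊆ q.1 ∧ closure p.2 ⊆ q.2 ∧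
            ∃ c, p.2 ⊆ ball c ((1/2:ℝ)^(n+1))) ∧
          (∀ p ∈ M, ∀ r ∈ M, p ≠ r → p.1 ∩ r.1 = ∅) ∧
          (∀ U : Set Y, IsOpen U → (U ∩ q.1).Nonempty →
            (∀ p ∈ M, p.1 ∩ (U ∩ q.1) = ∅) → False)) := by
      intro q
      by_cases hq : q ∈ F
      swap
      · exact ⟨∅, fun h => absurd h hq⟩
      let 𝒮 : Set (Set (Set Y × Set Γ)) :=
        {G : Set (Set Y × Set Γ) | (∀ p ∈ G, Pos p ∧ p.1 ⊆ q.1 ∧ closure p.2 ⊆ q.2 ∧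
            ∃ c, p.2 ⊆ ball c ((1/2:ℝ)^(n+1))) ∧
          (∀ p ∈ G, ∀ r ∈ G, p ≠ r → p.1 ∩ r.1 = ∅)}
      have hchains : ∀ c ⊆ 𝒮, IsChain (· ⊆ ·) c → ∃ ub ∈ 𝒮, ∀ s ∈ c, s ⊆ ub := by
        intro c hc hchain
        refine ⟨⋃₀ c, ⟨?_, ?_⟩, fun s hs => subset_sUnion_of_mem hs⟩
        · rintro p ⟨G, hGc, hpG⟩
          exact (hc hGc).1 p hpG
        · rintro p ⟨G, hGc, hpG⟩ r ⟨G', hG'c, hrG'⟩ hpr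
          rcases hchain.total hGc hG'c with hsub | hsub
          · exact (hc hG'c).2 p (hsub hpG) r hrG' hpr
          · exact (hc hGc).2 p hpG r (hsub hrG') hpr
      obtain ⟨M, hM⟩ := zorn_subset 𝒮 hchains
      refine ⟨M, fun _ => ⟨hM.prop.1, hM.prop.2, ?_⟩⟩
      intro U hU hUne hmiss
      obtain ⟨hqPos, hqV, hqball⟩ := hF1 q hq
      obtain ⟨W'', B'', hw1, hw2, hw3, hw4, hw5, hw6, hw7, hw8⟩ :=
        href q.1 q.2 hqPos.1 hqPos.2.2.1 hqPos.2.2.2.2 (U ∩ q.1) (hU.inter hqPos.1) hUne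
          inter_subset_right ((1/2:ℝ)^(n+1)) (by positivity)
      have hnewmem : insert (W'', B'') M ∈ 𝒮 := by
        constructor
        · rintro p (rfl | hpM)
          · exact ⟨⟨hw1, hw2, hw3, hw4, hw5⟩, hw6.trans inter_subset_right, hw7, hw8⟩
          · exact hM.prop.1 p hpM
        · rintro p (rfl | hpM) r (rfl | hrM) hpr
          · exact absurd rfl hpr
          · refine subset_empty_iff.1 ?_
            intro z hz
            rw [← hmiss r hrM]
            exact ⟨hz.2, hw6 hz.1⟩
          · refine subset_empty_iff.1 ?_
            intro z hz
            rw [← hmiss p hpM]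
            exact ⟨hz.1, hw6 hz.2⟩
          · exact hM.prop.2 p hpM r hrM hpr
      have hsubM : insert (W'', B'') M ⊆ M := hM.2 hnewmem (subset_insert _ _)
      have : (W'', B'') ∈ M := hsubM (mem_insert _ _)
      have h0 := hmiss _ this
      obtain ⟨z, hz⟩ := hw2
      rw [eq_empty_iff_forall_notMem] at h0
      exact h0 z ⟨hz, hw6 hz⟩
    choose M hM using hzorn
    refine ⟨{p | ∃ q ∈ F, p ∈ M q}, ⟨?_, ?_, ?_⟩, ?_⟩
    · rintro p ⟨q, hq, hpM⟩
      obtain ⟨hPos, hsub, hcl, hball⟩ := (hM q hq).1 p hpM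
      exact ⟨hPos, hsub.trans (hF1 q hq).2.1, hball⟩
    · rintro p ⟨q1, hq1, hpM⟩ r ⟨q2, hq2, hrM⟩ hpr
      by_cases hqq : q1 = q2
      · subst hqq
        exact (hM q1 hq1).2.1 p hpM r hrM hpr
      · have hd := hF2 q1 hq1 q2 hq2 hqq
        refine subset_empty_iff.1 ?_
        intro z hz
        rw [← hd]
        exact ⟨((hM q1 hq1).1 p hpM).2.1 hz.1, ((hM q2 hq2).1 r hrM).2.1 hz.2⟩
    · -- density
      intro z hzV
      rw [_root_.mem_closure_iff]
      intro U hU hzU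
      obtain ⟨w, hwU, hw2⟩ := _root_.mem_closure_iff.1 (hF3 hzV) U hU hzU
      simp only [mem_iUnion] at hw2
      obtain ⟨q, hq, hwq⟩ := hw2
      by_contra hcon
      refine (hM q hq).2.2 U hU ⟨w, hwU, hwq⟩ ?_
      intro p hpM
      rw [eq_empty_iff_forall_notMem]
      rintro x ⟨hx1, hx2, _⟩
      exact hcon ⟨x, hx2, by simp only [mem_iUnion]; exact ⟨p, ⟨q, hq, hpM⟩, hx1⟩⟩
    · rintro p ⟨q, hq, hpM⟩
      exact ⟨q, hq, ((hM q hq).1 p hpM).2.1, ((hM q hq).1 p hpM).2.2.1⟩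
  choose stepF hstep1 hstep2 using hstep
  let A : (n : ℕ) → {F : Set (Set Y × Set Γ) // Fam n F} := fun n =>
    Nat.rec ⟨{(V, B₀)}, hbase⟩ (fun n ih => ⟨stepF n ih.1 ih.2, hstep1 n ih.1 ih.2⟩) n
  have hAext : ∀ n, Ext (A n).1 (A (n+1)).1 := fun n => hstep2 n (A n).1 (A n).2
  have hAfam : ∀ n, Fam n (A n).1 := fun n => (A n).2
  refine ⟨V, hVo, hVne, ?_⟩
  have hcap : (⋂ n, ⋃ p ∈ (A n).1, p.1) ⊆ orbit Γ y₀ := by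
    intro y hy
    rw [mem_iInter] at hy
    have hex : ∀ n, ∃ p, p ∈ (A n).1 ∧ y ∈ p.1 := by
      intro n
      have := hy n
      simp only [mem_iUnion] at this
      obtain ⟨p, hp, hyp⟩ := this
      exact ⟨p, hp, hyp⟩
    choose p hpA hpy using hex
    have hchain : ∀ n, (p (n+1)).1 ⊆ (p n).1 ∧ closure ((p (n+1)).2) ⊆ (p n).2 := by
      intro n
      obtain ⟨q, hqA, hsub, hcl⟩ := hAext n (p (n+1)) (hpA (n+1))
      have heq : q = p n := by
        by_contra hne'
        have h0 := (hAfam n).2.1 q hqA (p n) (hpA n) hne'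
        exact eq_empty_iff_forall_notMem.1 h0 y ⟨hsub (hpy (n+1)), hpy n⟩
      rw [heq] at hsub hcl
      exact ⟨hsub, hcl⟩
    have hmono : ∀ {m k : ℕ}, k ≤ m → (p m).2 ⊆ (p k).2 := by
      intro m k h
      induction h with
      | refl => exact Subset.rfl
      | @step m _ ih => exact (subset_closure.trans (hchain m).2).trans ih
    have hball : ∀ n, ∃ c, (p n).2 ⊆ ball c ((1/2:ℝ)^n) :=
      fun n => ((hAfam n).1 (p n) (hpA n)).2.2
    choose c hc using hball
    have hneB : ∀ n, (p n).2.Nonempty := fun n => ((hAfam n).1 (p n) (hpA n)).1.2.2.2.1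
    choose gs hgs using hneB
    have hcauchy : CauchySeq gs := by
      rw [Metric.cauchySeq_iff]
      intro ε hε
      obtain ⟨n, hn⟩ := exists_pow_lt_of_lt_one (show (0:ℝ) < ε/2 by linarith)
        (by norm_num : (1/2:ℝ) < 1)
      refine ⟨n, fun m hm k hk => ?_⟩
      have h1 : dist (gs m) (c n) < (1/2:ℝ)^n := mem_ball.1 (hc n (hmono hm (hgs m)))
      have h2 : dist (gs k) (c n) < (1/2:ℝ)^n := mem_ball.1 (hc n (hmono hk (hgs k)))
      calc dist (gs m) (gs k) ≤ dist (gs m) (c n) + dist (gs k) (c n) := dist_triangle_right _ _ _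
        _ < ε := by linarith
    obtain ⟨g, hg⟩ := cauchySeq_tendsto_of_complete hcauchy
    have hgcl : ∀ n, g ∈ closure ((p n).2) := by
      intro n
      apply mem_closure_of_tendsto hg
      filter_upwards [Filter.eventually_ge_atTop n] with m hm
      exact hmono hm (hgs m)
    have hkey : g • y₀ = y := by
      by_contra hne'
      obtain ⟨O₁, O₂, hO₁, hO₂, hgO₁, hyO₂, hdisj⟩ := t2_separation hne'
      obtain ⟨ε, hε, hballsub⟩ := Metric.isOpen_iff.1 (hO₁.preimage hecont) g hgO₁
      obtain ⟨n, hn⟩ := exists_pow_lt_of_lt_one (show (0:ℝ) < ε/2 by linarith)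
        (by norm_num : (1/2:ℝ) < 1)
      have hsubball : (p n).2 ⊆ ball g ε := by
        intro h hh
        have h1 : dist h (c n) < (1/2:ℝ)^n := mem_ball.1 (hc n hh)
        have h2 : dist g (c n) ≤ (1/2:ℝ)^n := by
          have hsubcl : closure ((p n).2) ⊆ closedBall (c n) ((1/2:ℝ)^n) :=
            closure_minimal ((hc n).trans ball_subset_closedBall) isClosed_closedBall
          exact mem_closedBall.1 (hsubcl (hgcl n))
        rw [mem_ball]
        calc dist h g ≤ dist h (c n) + dist g (c n) := dist_triangle_right _ _ _
          _ < ε := by linarith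
      have himsub : e '' (p n).2 ⊆ O₁ := by
        rintro _ ⟨h, hh, rfl⟩
        exact hballsub (hsubball hh)
      have hycl : y ∈ closure (e '' (p n).2) :=
        ((hAfam n).1 (p n) (hpA n)).1.2.2.2.2 (hpy n)
      obtain ⟨z, hz1, hz2⟩ := _root_.mem_closure_iff.1 hycl O₂ hO₂ hyO₂
      exact Set.disjoint_left.1 hdisj (himsub hz2) hz1
    exact mem_orbit_iff.2 ⟨g, hkey⟩
  have hmeag1 : IsMeagre (⋃ n, (closure (⋃ p ∈ (A n).1, p.1) \ ⋃ p ∈ (A n).1, p.1)) :=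
    isMeagre_iUnion fun n => nwd_isMeagre
      (isNowhereDense_closure_diff (isOpen_biUnion fun p hp => ((hAfam n).1 p hp).1.1))
  refine hmeag1.mono ?_
  rintro z ⟨hzV, hzo⟩
  have hz2 : z ∉ ⋂ n, ⋃ p ∈ (A n).1, p.1 := fun hmem => hzo (hcap hmem)
  rw [mem_iInter] at hz2
  push_neg at hz2
  obtain ⟨n, hn⟩ := hz2
  exact mem_iUnion.2 ⟨n, (hAfam n).2.2 hzV, hn⟩

end Key

end UEAux17

open UEAux17 Set Pointwise

/-- If a Polish group `Γ` acts continuously and minimally on a Hausdorff Baire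
space `X`, acts continuously on a Hausdorff Baire space `Y`, and `π : X → Y` is a
continuous surjective `Γ`-map, then the image under `π` of a point with comeager
orbit has comeager orbit. -/
theorem uniqueErgodicity.stmt17
    (Γ : Type*) [Group Γ] [TopologicalSpace Γ] [IsTopologicalGroup Γ] [PolishSpace Γ]
    (X Y : Type*) [TopologicalSpace X] [TopologicalSpace Y]
    [T2Space X] [T2Space Y] [BaireSpace X] [BaireSpace Y]
    [MulAction Γ X] [MulAction Γ Y] [ContinuousSMul Γ X] [ContinuousSMul Γ Y]
    (hmin : ∀ x : X, Dense (orbit Γ x))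
    (π : X → Y) (hcont : Continuous π) (hsurj : Function.Surjective π)
    (hequiv : ∀ (g : Γ) (x : X), π (g • x) = g • π x)
    (x₀ : X) (hx₀ : orbit Γ x₀ ∈ residual X) :
    orbit Γ (π x₀) ∈ residual Y := by
  classical
  have hXne : Nonempty X := ⟨x₀⟩
  have hYne : Nonempty Y := ⟨π x₀⟩
  set y₀ := π x₀ with hy₀
  obtain ⟨D, hDc, hDd⟩ := TopologicalSpace.exists_countable_dense Γ
  -- every orbit in Y is dense
  have horbY : ∀ y : Y, Dense (orbit Γ y) := by
    intro y
    obtain ⟨x, rfl⟩ := hsurj y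
    have himg : π '' orbit Γ x = orbit Γ (π x) := by
      ext z
      constructor
      · rintro ⟨_, ⟨g, rfl⟩, rfl⟩
        exact mem_orbit_iff.2 ⟨g, (hequiv g x).symm⟩
      · rintro ⟨g, rfl⟩
        exact ⟨g • x, mem_orbit x g, hequiv g x⟩
    rw [← himg]
    exact (hsurj.denseRange).dense_image hcont (hmin x)
  -- given a nonempty open subset of `Y`, every point can be translated into it by some `d ∈ D`
  have hcoverY : ∀ (U : Set Y), IsOpen U → U.Nonempty → ∀ y : Y, ∃ d ∈ D, d • y ∈ U := by
    intro U hU hUne y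
    obtain ⟨z, hzU, hzOrb⟩ := (horbY y).inter_open_nonempty U hU hUne
    obtain ⟨g, rfl⟩ := hzOrb
    have hopen : IsOpen {g : Γ | g • y ∈ U} := hU.preimage (continuous_id.smul continuous_const)
    obtain ⟨d, hdD, hd⟩ := hDd.exists_mem_open hopen ⟨g, hzU⟩
    exact ⟨d, hdD, hd⟩
  have hcoverX : ∀ (U : Set X), IsOpen U → U.Nonempty → ∀ x : X, ∃ d ∈ D, d • x ∈ U := by
    intro U hU hUne x
    obtain ⟨z, hzU, hzOrb⟩ := (hmin x).inter_open_nonempty U hU hUne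
    obtain ⟨g, rfl⟩ := hzOrb
    have hopen : IsOpen {g : Γ | g • x ∈ U} := hU.preimage (continuous_id.smul continuous_const)
    obtain ⟨d, hdD, hd⟩ := hDd.exists_mem_open hopen ⟨g, hzU⟩
    exact ⟨d, hdD, hd⟩
  -- preimages of meager sets are meager
  have hpre : ∀ {S : Set Y}, IsMeagre S → IsMeagre (π ⁻¹' S) := by
    intro S hS
    rw [isMeagre_iff_countable_union_isNowhereDense] at hS
    obtain ⟨T, hTnwd, hTc, hST⟩ := hS
    have key : ∀ t ∈ T, IsNowhereDense (π ⁻¹' closure t) := by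
      intro t ht
      have hFc : IsClosed (π ⁻¹' closure t) := isClosed_closure.preimage hcont
      rw [hFc.isNowhereDense_iff]
      by_contra hne
      rw [← ne_eq, ← nonempty_iff_ne_empty] at hne
      have hcover : (univ : Set Y) ⊆ ⋃ d ∈ D, d⁻¹ • closure t := by
        intro y _
        obtain ⟨x, rfl⟩ := hsurj y
        obtain ⟨d, hdD, hdU⟩ := hcoverX _ isOpen_interior hne x
        have h1 : π (d • x) ∈ closure t := mem_preimage.1 (interior_subset hdU)
        rw [hequiv d x] at h1
        refine mem_biUnion hdD ⟨d • π x, h1, ?_⟩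
        simp
      have hme : IsMeagre (univ : Set Y) := by
        refine (isMeagre_biUnion' hDc fun d _ => isMeagre_smul d⁻¹ ?_).mono hcover
        exact nwd_isMeagre (hTnwd t ht).closure
      exact not_isMeagre_univ hme
    have hsub : π ⁻¹' S ⊆ ⋃ t ∈ T, π ⁻¹' closure t := by
      intro x hx
      obtain ⟨t, htT, hxt⟩ := hST hx
      exact mem_biUnion htT (subset_closure hxt)
    exact (isMeagre_biUnion' hTc fun t ht => nwd_isMeagre (key t ht)).mono hsub
  -- images of nonempty open subsets of Γ at x₀ are nonmeager
  have hBx : ∀ (B : Set Γ), IsOpen B → B.Nonempty →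
      ¬ IsMeagre ((fun g : Γ => g • x₀) '' B) := by
    intro B hB hBne hmeag
    have cover : orbit Γ x₀ ⊆ ⋃ d ∈ D, d • ((fun g : Γ => g • x₀) '' B) := by
      rintro _ ⟨h, rfl⟩
      have hopen : IsOpen (h • B⁻¹) := (hB.inv).smul h
      have hne2 : (h • B⁻¹).Nonempty := by
        obtain ⟨b, hb⟩ := hBne
        exact ⟨h • b⁻¹, smul_mem_smul_set (by simpa using hb)⟩
      obtain ⟨d, hdD, hd⟩ := hDd.exists_mem_open hopen hne2
      obtain ⟨u, hu, hdu⟩ := hd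
      have huB : u⁻¹ ∈ B := by simpa using hu
      refine mem_biUnion hdD ⟨u⁻¹ • x₀, ⟨u⁻¹, huB, rfl⟩, ?_⟩
      show d • u⁻¹ • x₀ = h • x₀
      have hdu' : h * u = d := hdu
      rw [smul_smul, ← hdu', mul_inv_cancel_right]
    have h2 : IsMeagre (orbit Γ x₀) :=
      (isMeagre_biUnion' hDc fun d _ => isMeagre_smul d hmeag).mono cover
    have h3 : orbit Γ x₀ ∩ (orbit Γ x₀)ᶜ ∈ residual X := Filter.inter_mem hx₀ h2
    rw [inter_compl_self] at h3
    simpa using (dense_of_mem_residual h3).nonempty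
  -- images of nonempty open subsets of Γ at y₀ are nonmeager
  have hBy : ∀ (B : Set Γ), IsOpen B → B.Nonempty →
      ¬ IsMeagre ((fun g : Γ => g • y₀) '' B) := by
    intro B hB hBne hmeag
    have hsub : (fun g : Γ => g • x₀) '' B ⊆ π ⁻¹' ((fun g : Γ => g • y₀) '' B) := by
      rintro _ ⟨g, hg, rfl⟩
      rw [mem_preimage, hequiv g x₀]
      exact ⟨g, hg, rfl⟩
    exact hBx B hB hBne ((hpre hmeag).mono hsub)
  -- localized version
  have hloc : ∀ (B : Set Γ) (W : Set Y), IsOpen B → IsOpen W →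
      (((fun g : Γ => g • y₀) '' B) ∩ W).Nonempty →
      ¬ IsMeagre (((fun g : Γ => g • y₀) '' B) ∩ W) := by
    rintro B W hB hW ⟨z, hz1, hz2⟩ hmeag
    obtain ⟨g, hgB, rfl⟩ := hz1
    have hB'o : IsOpen (B ∩ (fun g : Γ => g • y₀) ⁻¹' W) :=
      hB.inter (hW.preimage (continuous_id.smul continuous_const))
    refine hBy _ hB'o ⟨g, hgB, hz2⟩ (hmeag.mono ?_)
    rintro _ ⟨g', ⟨h1, h2⟩, rfl⟩
    exact ⟨⟨g', h1, rfl⟩, h2⟩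
  -- apply the key construction
  obtain ⟨V, hVo, hVne, hVme⟩ := keyCapture y₀ hloc
  -- translate
  have hcover : (orbit Γ y₀)ᶜ ⊆ ⋃ d ∈ D, d⁻¹ • (V \ orbit Γ y₀) := by
    intro y hy
    obtain ⟨d, hdD, hdV⟩ := hcoverY V hVo hVne y
    have hdnot : d • y ∉ orbit Γ y₀ := by
      intro hmem
      obtain ⟨h, hh⟩ := hmem
      have hh' : h • y₀ = d • y := hh
      exact hy (mem_orbit_iff.2 ⟨d⁻¹ * h, by rw [mul_smul, hh', inv_smul_smul]⟩)
    refine mem_biUnion hdD ⟨d • y, ⟨hdV, hdnot⟩, ?_⟩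
    simp
  have hfinal : IsMeagre ((orbit Γ y₀)ᶜ) :=
    (isMeagre_biUnion' hDc fun d _ => isMeagre_smul d⁻¹ hVme).mono hcover
  rw [IsMeagre, compl_compl] at hfinal
  exact hfinal
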